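/- Derivative-based recognition for context-free grammars is correct on single-symbol steps: for a context-free grammar G over terminal alphabet Σ with language L(A) for nonterminal/expression A, the derivative operation satisfies L(d_a(A)) = {w | aw ∈ L(A)}, where d is defined by: d of the empty language is empty; d_a of a single-terminal expression matching set R is ε if a ∈ R else empty; d distributes over choice; and for a sequence A₁A₂…Aₙ, d_a(A₁…Aₙ) = d_a(A₁)·A₂…Aₙ + ν(A₁)·d_a(A₂…Aₙ) with ν the nullability restriction (ν(A) = {ε} if ε ∈ L(A), else ∅), interpreted coinductively/as a least fixpoint over the grammar's equations. -/

import Mathlib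

/-- Grammar expressions of a context-free grammar, viewed as a system of
language equations: the empty language, the empty string, single-terminal
classes `R ⊆ σ`, finite choice, finite sequencing, nonterminals, and the
nullability restriction `ν(e)` (whose language is `{ε}` if `ε ∈ L(e)` and `∅`
otherwise). -/
inductive GExpr (σ N : Type) : Type
  | empty
  | eps
  | tm (R : Set σ)
  | alt (es : List (GExpr σ N))
  | seq (es : List (GExpr σ N))
  | var (A : N)
  | null (e : GExpr σ N)

/-- The language semantics of grammar expressions as the least solution of the
grammar's equations (an inductive predicate is exactly the least fixpoint):
`Gen rules e w` means `w ∈ L(e)`. -/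
inductive Gen {σ N : Type} (rules : N → GExpr σ N) : GExpr σ N → List σ → Prop
  | eps : Gen rules .eps []
  | tm {R : Set σ} {a : σ} : a ∈ R → Gen rules (.tm R) [a]
  | alt {es : List (GExpr σ N)} {e : GExpr σ N} {w : List σ} :
      e ∈ es → Gen rules e w → Gen rules (.alt es) w
  | seqNil : Gen rules (.seq []) []
  | seqCons {e : GExpr σ N} {es : List (GExpr σ N)} {w₁ w₂ : List σ} :
      Gen rules e w₁ → Gen rules (.seq es) w₂ →
      Gen rules (.seq (e :: es)) (w₁ ++ w₂)
  | var {A : N} {w : List σ} : Gen rules (rules A) w → Gen rules (.var A) w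
  | null {e : GExpr σ N} : Gen rules e [] → Gen rules (.null e) []

/-- The single-character derivative of a grammar expression.  Derivatives of
nonterminals are new nonterminals: we work over the extended nonterminal set
`N × List σ`, where `(A, u)` stands for the iterated derivative of `A` along
`u`.  The clauses are exactly those of derivative-based parsing:
`d_a(∅) = ∅`, `d_a(ε) = ∅`, `d_a(R) = ε` if `a ∈ R` else `∅`, `d_a`
distributes over choice, and
`d_a(e·es) = d_a(e)·es + ν(e)·d_a(es)`. -/
noncomputable def gderiv {σ N : Type} (a : σ) :
    GExpr σ (N × List σ) → GExpr σ (N × List σ)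
  | .empty => .empty
  | .eps => .empty
  | .tm R => if Classical.propDecidable (a ∈ R) |>.decide then .eps else .empty
  | .alt es => .alt (es.attach.map fun ⟨e, _⟩ => gderiv a e)
  | .seq [] => .empty
  | .seq (e :: es) =>
      .alt [.seq (gderiv a e :: es), .seq [.null e, gderiv a (.seq es)]]
  | .var (A, u) => .var (A, u ++ [a])
  | .null _ => .empty
termination_by e => sizeOf e
decreasing_by
  all_goals simp_wf
  all_goals try (rename_i he _; have := List.sizeOf_lt_of_mem he; omega)
  all_goals try (have := List.sizeOf_lt_of_mem ‹_ ∈ es›; omega)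
  all_goals omega

/-- Embedding of the base grammar expressions into the extended nonterminals. -/
def liftG {σ N : Type} : GExpr σ N → GExpr σ (N × List σ)
  | .empty => .empty
  | .eps => .eps
  | .tm R => .tm R
  | .alt es => .alt (es.attach.map fun ⟨e, _⟩ => liftG e)
  | .seq es => .seq (es.attach.map fun ⟨e, _⟩ => liftG e)
  | .var A => .var (A, [])
  | .null e => .null (liftG e)
termination_by e => sizeOf e
decreasing_by
  all_goals simp_wf
  all_goals try (have := List.sizeOf_lt_of_mem ‹_ ∈ es›; omega)
  all_goals omega

/-- The derived system of equations: the new nonterminal `(A, u)` is defined by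
the iterated derivative of (the lift of) the rule for `A` along `u`. -/
noncomputable def derivedRules {σ N : Type} (rules : N → GExpr σ N) :
    N × List σ → GExpr σ (N × List σ) :=
  fun p => p.2.foldl (fun e a => gderiv a e) (liftG (rules p.1))

variable {σ N : Type}

lemma derivedRules_snoc (rules : N → GExpr σ N) (A : N) (u : List σ) (a : σ) :
    derivedRules rules (A, u ++ [a]) = gderiv a (derivedRules rules (A, u)) := by
  simp [derivedRules, List.foldl_append]

lemma gderiv_tm_pos {a : σ} {R : Set σ} (h : a ∈ R) :
    (gderiv a (.tm R) : GExpr σ (N × List σ)) = .eps := by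
  rw [gderiv]; simp [h]

lemma gderiv_tm_neg {a : σ} {R : Set σ} (h : a ∉ R) :
    (gderiv a (.tm R) : GExpr σ (N × List σ)) = .empty := by
  rw [gderiv]; simp [h]

lemma mem_map_gderiv {a : σ} {e₀ : GExpr σ (N × List σ)}
    {es : List (GExpr σ (N × List σ))} (h : e₀ ∈ es) :
    gderiv a e₀ ∈ es.attach.map (fun x => gderiv a x.1) := by
  exact List.mem_map.2 ⟨⟨e₀, h⟩, List.mem_attach _ _, rfl⟩

lemma gderiv_complete (rules : N → GExpr σ N) (a : σ)
    {e : GExpr σ (N × List σ)} {w' : List σ}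
    (h : Gen (derivedRules rules) e w') :
    ∀ w, w' = a :: w → Gen (derivedRules rules) (gderiv a e) w := by
  induction h with
  | eps => intro w hw; exact absurd hw (by simp)
  | tm hR =>
      intro w hw
      injection hw with h1 h2
      subst h1; subst h2
      rw [gderiv_tm_pos hR]; exact Gen.eps
  | alt hm hg ih =>
      intro w hw
      rw [gderiv]
      exact Gen.alt (mem_map_gderiv hm) (ih w hw)
  | seqNil => intro w hw; exact absurd hw (by simp)
  | @seqCons e es w₁ w₂ h₁ h₂ ih₁ ih₂ =>
      intro w hw
      rw [gderiv]
      cases w₁ with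
      | nil =>
          simp only [List.nil_append] at hw
          apply Gen.alt (List.mem_cons_of_mem _ (List.mem_cons_self))
          have hd : Gen (derivedRules rules) (gderiv a (.seq es)) w := ih₂ w hw
          have : Gen (derivedRules rules) (.seq [.null e, gderiv a (.seq es)])
              ([] ++ (w ++ [])) :=
            Gen.seqCons (Gen.null h₁) (Gen.seqCons hd Gen.seqNil)
          simpa using this
      | cons b w₁' =>
          simp only [List.cons_append, List.cons.injEq] at hw
          obtain ⟨rfl, rfl⟩ := hw
          exact Gen.alt (List.mem_cons_self)
            (Gen.seqCons (ih₁ w₁' rfl) h₂)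
  | @var p wv h ih =>
      intro w hw
      obtain ⟨A, u⟩ := p
      rw [gderiv]
      exact Gen.var (by rw [derivedRules_snoc]; exact ih w hw)
  | null h ih => intro w hw; exact absurd hw (by simp)

lemma gderiv_sound (rules : N → GExpr σ N) (a : σ)
    {x : GExpr σ (N × List σ)} {w : List σ}
    (h : Gen (derivedRules rules) x w) :
    (∀ e, x = gderiv a e → Gen (derivedRules rules) e (a :: w)) ∧
    (∀ e₁ es, x = .seq (gderiv a e₁ :: es) →
        Gen (derivedRules rules) (.seq (e₁ :: es)) (a :: w)) ∧
    (∀ e₁ es, x = .seq [.null e₁, gderiv a (.seq es)] →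
        Gen (derivedRules rules) (.seq (e₁ :: es)) (a :: w)) ∧
    (∀ es, x = .seq [gderiv a (.seq es)] →
        Gen (derivedRules rules) (.seq es) (a :: w)) := by
  induction h with
  | eps =>
      refine ⟨?_, by simp, by simp, by simp⟩
      intro e he
      cases e with
      | tm R =>
          rcases Classical.em (a ∈ R) with hR | hR
          · exact Gen.tm hR
          · rw [gderiv_tm_neg hR] at he; exact absurd he (by simp)
      | empty => rw [gderiv] at he; exact absurd he (by simp)
      | eps => rw [gderiv] at he; exact absurd he (by simp)
      | alt es => rw [gderiv] at he; exact absurd he (by simp)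
      | seq es =>
          cases es with
          | nil => rw [gderiv] at he; exact absurd he (by simp)
          | cons e₁ es => rw [gderiv] at he; exact absurd he (by simp)
      | var p => obtain ⟨A, u⟩ := p; rw [gderiv] at he; exact absurd he (by simp)
      | null e => rw [gderiv] at he; exact absurd he (by simp)
  | tm hR =>
      refine ⟨?_, by simp, by simp, by simp⟩
      intro e he
      cases e with
      | tm R' =>
          rcases Classical.em (a ∈ R') with hR' | hR'
          · rw [gderiv_tm_pos hR'] at he; exact absurd he (by simp)
          · rw [gderiv_tm_neg hR'] at he; exact absurd he (by simp)
      | empty => rw [gderiv] at he; exact absurd he (by simp)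
      | eps => rw [gderiv] at he; exact absurd he (by simp)
      | alt es => rw [gderiv] at he; exact absurd he (by simp)
      | seq es =>
          cases es with
          | nil => rw [gderiv] at he; exact absurd he (by simp)
          | cons e₁ es => rw [gderiv] at he; exact absurd he (by simp)
      | var p => obtain ⟨A, u⟩ := p; rw [gderiv] at he; exact absurd he (by simp)
      | null e => rw [gderiv] at he; exact absurd he (by simp)
  | @alt es' e₀ w hm hg ih =>
      refine ⟨?_, by simp, by simp, by simp⟩
      intro e he
      cases e with
      | tm R =>
          rcases Classical.em (a ∈ R) with hR | hR
          · rw [gderiv_tm_pos hR] at he; exact absurd he (by simp)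
          · rw [gderiv_tm_neg hR] at he; exact absurd he (by simp)
      | empty => rw [gderiv] at he; exact absurd he (by simp)
      | eps => rw [gderiv] at he; exact absurd he (by simp)
      | alt es =>
          rw [gderiv] at he
          injection he with he'
          subst he'
          obtain ⟨⟨e₁, hmem⟩, -, rfl⟩ := List.mem_map.1 hm
          exact Gen.alt hmem (ih.1 e₁ rfl)
      | seq es =>
          cases es with
          | nil => rw [gderiv] at he; exact absurd he (by simp)
          | cons e₁ es =>
              rw [gderiv] at he
              injection he with he'
              rw [he'] at hm
              simp only [List.mem_cons, List.not_mem_nil, or_false] at hm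
              rcases hm with rfl | rfl
              · exact ih.2.1 e₁ es rfl
              · exact ih.2.2.1 e₁ es rfl
      | var p => obtain ⟨A, u⟩ := p; rw [gderiv] at he; exact absurd he (by simp)
      | null e => rw [gderiv] at he; exact absurd he (by simp)
  | seqNil =>
      refine ⟨?_, by simp, by simp, by simp⟩
      intro e he
      cases e with
      | tm R =>
          rcases Classical.em (a ∈ R) with hR | hR
          · rw [gderiv_tm_pos hR] at he; exact absurd he (by simp)
          · rw [gderiv_tm_neg hR] at he; exact absurd he (by simp)
      | empty => rw [gderiv] at he; exact absurd he (by simp)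
      | eps => rw [gderiv] at he; exact absurd he (by simp)
      | alt es => rw [gderiv] at he; exact absurd he (by simp)
      | seq es =>
          cases es with
          | nil => rw [gderiv] at he; exact absurd he (by simp)
          | cons e₁ es => rw [gderiv] at he; exact absurd he (by simp)
      | var p => obtain ⟨A, u⟩ := p; rw [gderiv] at he; exact absurd he (by simp)
      | null e => rw [gderiv] at he; exact absurd he (by simp)
  | @seqCons f fs w₁ w₂ h₁ h₂ ih₁ ih₂ =>
      refine ⟨?_, ?_, ?_, ?_⟩
      · intro e he
        cases e with
        | tm R =>
            rcases Classical.em (a ∈ R) with hR | hR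
            · rw [gderiv_tm_pos hR] at he; exact absurd he (by simp)
            · rw [gderiv_tm_neg hR] at he; exact absurd he (by simp)
        | empty => rw [gderiv] at he; exact absurd he (by simp)
        | eps => rw [gderiv] at he; exact absurd he (by simp)
        | alt es => rw [gderiv] at he; exact absurd he (by simp)
        | seq es =>
            cases es with
            | nil => rw [gderiv] at he; exact absurd he (by simp)
            | cons e₁ es => rw [gderiv] at he; exact absurd he (by simp)
        | var p => obtain ⟨A, u⟩ := p; rw [gderiv] at he; exact absurd he (by simp)
        | null e => rw [gderiv] at he; exact absurd he (by simp)
      · intro e₁ es he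
        injection he with he'
        injection he' with he1 he2
        subst he1; subst he2
        exact Gen.seqCons (ih₁.1 e₁ rfl) h₂
      · intro e₁ es he
        injection he with he'
        injection he' with he1 he2
        subst he1; subst he2
        cases h₁ with
        | null hnull =>
            have hw := ih₂.2.2.2 es rfl
            have := Gen.seqCons hnull hw
            simpa using this
      · intro es he
        injection he with he'
        injection he' with he1 he2
        subst he1; subst he2
        cases h₂ with
        | seqNil =>
            have := ih₁.1 (.seq es) rfl
            simpa using this
  | @var p wv h ih =>
      refine ⟨?_, by simp, by simp, by simp⟩
      intro e he
      cases e with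
      | tm R =>
          rcases Classical.em (a ∈ R) with hR | hR
          · rw [gderiv_tm_pos hR] at he; exact absurd he (by simp)
          · rw [gderiv_tm_neg hR] at he; exact absurd he (by simp)
      | empty => rw [gderiv] at he; exact absurd he (by simp)
      | eps => rw [gderiv] at he; exact absurd he (by simp)
      | alt es => rw [gderiv] at he; exact absurd he (by simp)
      | seq es =>
          cases es with
          | nil => rw [gderiv] at he; exact absurd he (by simp)
          | cons e₁ es => rw [gderiv] at he; exact absurd he (by simp)
      | var q =>
          obtain ⟨A, u⟩ := q
          rw [gderiv] at he
          injection he with he'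
          have := ih.1 (derivedRules rules (A, u))
            (by rw [he']; exact derivedRules_snoc rules A u a)
          exact Gen.var this
      | null e => rw [gderiv] at he; exact absurd he (by simp)
  | null h ih =>
      refine ⟨?_, by simp, by simp, by simp⟩
      intro e he
      cases e with
      | tm R =>
          rcases Classical.em (a ∈ R) with hR | hR
          · rw [gderiv_tm_pos hR] at he; exact absurd he (by simp)
          · rw [gderiv_tm_neg hR] at he; exact absurd he (by simp)
      | empty => rw [gderiv] at he; exact absurd he (by simp)
      | eps => rw [gderiv] at he; exact absurd he (by simp)
      | alt es => rw [gderiv] at he; exact absurd he (by simp)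
      | seq es =>
          cases es with
          | nil => rw [gderiv] at he; exact absurd he (by simp)
          | cons e₁ es => rw [gderiv] at he; exact absurd he (by simp)
      | var p => obtain ⟨A, u⟩ := p; rw [gderiv] at he; exact absurd he (by simp)
      | null e => rw [gderiv] at he; exact absurd he (by simp)


/-- **Single-step correctness of derivative-based recognition for context-free
grammars**: for every grammar expression `e` over the derived system,
`L(d_a(e)) = {w | a :: w ∈ L(e)}`. -/
theorem gderiv_correct {σ N : Type} (rules : N → GExpr σ N) (a : σ)
    (e : GExpr σ (N × List σ)) :
    {w : List σ | Gen (derivedRules rules) (gderiv a e) w} =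
      {w : List σ | Gen (derivedRules rules) e (a :: w)} := by
  ext w
  constructor
  · intro h
    exact (gderiv_sound rules a h).1 e rfl
  · intro h
    exact gderiv_complete rules a h w rfl
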